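/- Run MPI with parameters m ≥ 0 and ℓ ≥ 1 on the deterministic MDP M(γ, ε, ℓ), starting from v_0 = 0, with all initial policies π_0 = π_{−1} = ⋯ = π_{−ℓ+2} equal to the policy taking left in every state, and with error terms ε_k(i) = −ε if i = k, ε_k(i) = ε if i = k + ℓ, and ε_k(i) = 0 otherwise. Then there exists a run of the algorithm (i.e., a choice, at every iteration, of a policy among those greedy with respect to the current value function) such that for every iteration k ≥ 1, ‖v_* − v_{π_{k,ℓ}}‖_∞ = 2(γ − γ^k) ε / ((1 − γ)(1 − γ^ℓ)); in particular the performance bound 2(γ − γ^k)ε/((1 − γ)(1 − γ^ℓ)) + (2γ^k/(1 − γ))‖v_* − v_0‖_∞ is attained with equality. -/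

import Mathlib

/-- Actions of the deterministic MDP `M(γ, ε, ℓ)`. -/
inductive Act where
  | left : Act
  | right : Act
deriving DecidableEq

/-- Deterministic transition: state `1` is absorbing; from `i ≥ 2`, `left` moves to `i - 1`
and `right` moves to `i + ℓ - 1`. -/
def nxt (ℓ : ℕ) (i : ℕ) (a : Act) : ℕ :=
  if i ≤ 1 then 1 else
    match a with
    | Act.left => i - 1
    | Act.right => i + ℓ - 1

/-- Reward: `0` in state `1` and for `left`; `r_i = −2ε(γ−γ^i)/(1−γ)` for `right` from `i ≥ 2`. -/
noncomputable def rew (γ ε : ℝ) (i : ℕ) (a : Act) : ℝ :=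
  if i ≤ 1 then 0 else
    match a with
    | Act.left => 0
    | Act.right => -2 * ε * (γ - γ ^ i) / (1 - γ)

/-- `r_i = −2ε(γ−γ^i)/(1−γ)`. -/
noncomputable def rr (γ ε : ℝ) (i : ℕ) : ℝ := -2 * ε * (γ - γ ^ i) / (1 - γ)

/-- Trajectory induced by a (possibly non-stationary) policy `σ` from state `s`. -/
def traj (ℓ : ℕ) (σ : ℕ → ℕ → Act) (s : ℕ) : ℕ → ℕ
  | 0 => s
  | (t+1) => nxt ℓ (traj ℓ σ s t) (σ t (traj ℓ σ s t))

/-- Discounted value of a (possibly non-stationary) policy `σ` from state `s`. -/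
noncomputable def val (γ ε : ℝ) (ℓ : ℕ) (σ : ℕ → ℕ → Act) (s : ℕ) : ℝ :=
  ∑' t : ℕ, γ ^ t * rew γ ε (traj ℓ σ s t) (σ t (traj ℓ σ s t))

/-- Bellman operator of a stationary policy `π`. -/
noncomputable def bellT (γ ε : ℝ) (ℓ : ℕ) (π : ℕ → Act) (v : ℕ → ℝ) : ℕ → ℝ :=
  fun i => rew γ ε i (π i) + γ * v (nxt ℓ i (π i))

/-- `π` is greedy with respect to `v`: `T_π v` is the pointwise max over the two actions. -/
noncomputable def IsGreedyD (γ ε : ℝ) (ℓ : ℕ) (π : ℕ → Act) (v : ℕ → ℝ) : Prop :=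
  ∀ i, bellT γ ε ℓ π v i =
    max (rew γ ε i Act.left + γ * v (nxt ℓ i Act.left))
        (rew γ ε i Act.right + γ * v (nxt ℓ i Act.right))

/-- Composed Bellman operator `T_{π_k} T_{π_{k-1}} ⋯ T_{π_{k-n+1}}`. -/
noncomputable def TcompD (γ ε : ℝ) (ℓ : ℕ) (π : ℤ → ℕ → Act) : ℕ → ℤ → (ℕ → ℝ) → (ℕ → ℝ)
  | 0, _ => id
  | (n+1), k => fun v => bellT γ ε ℓ (π k) (TcompD γ ε ℓ π n (k-1) v)

/-- The error terms used in the tightness construction. -/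
noncomputable def errf (ε : ℝ) (ℓ : ℕ) (k i : ℕ) : ℝ :=
  if i = k then -ε else if i = k + ℓ then ε else 0

/-- The periodic non-stationary policy `π_{k,ℓ}` looping over `π_k, π_{k-1}, …, π_{k-ℓ+1}`. -/
def periodic (ℓ : ℕ) (π : ℤ → ℕ → Act) (k : ℤ) : ℕ → ℕ → Act :=
  fun t => π (k - ((t % ℓ : ℕ) : ℤ))


set_option linter.unusedSectionVars false

/-! ### auxiliary definitions -/

def pol : ℤ → ℕ → Act := fun j i => if (i : ℤ) = j ∧ 1 ≤ j then Act.right else Act.left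

noncomputable def vv (γ ε : ℝ) (m ℓ : ℕ) : ℕ → ℕ → ℝ
  | 0 => fun _ => 0
  | (k+1) => fun i =>
      (TcompD γ ε ℓ pol ℓ ((k+1 : ℕ) : ℤ))^[m]
        (bellT γ ε ℓ (pol ((k+1 : ℕ) : ℤ)) (vv γ ε m ℓ k)) i + errf ε ℓ (k+1) i

noncomputable def Bs (γ ε : ℝ) (j : ℕ) : ℝ := 2 * ε * (1 - γ ^ j) / (1 - γ)

noncomputable def Pb (γ ε : ℝ) (m ℓ k : ℕ) : ℝ :=
  ε * ∑ r ∈ Finset.range k, (γ ^ (m * ℓ + 1)) ^ r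

/-! ### basic facts -/

section Basic

variable {γ ε : ℝ} {m ℓ : ℕ}

lemma rew_left (i : ℕ) : rew γ ε i Act.left = 0 := by
  unfold rew; split <;> rfl

lemma rew_low {i : ℕ} (h : i ≤ 1) (a : Act) : rew γ ε i a = 0 := by
  unfold rew; rw [if_pos h]

lemma rew_right {i : ℕ} (h : 2 ≤ i) : rew γ ε i Act.right = rr γ ε i := by
  unfold rew rr; rw [if_neg (by omega)]

lemma nxt_low {i : ℕ} (h : i ≤ 1) (a : Act) : nxt ℓ i a = 1 := by
  unfold nxt; rw [if_pos h]

lemma nxt_left {i : ℕ} (h : 2 ≤ i) : nxt ℓ i Act.left = i - 1 := by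
  unfold nxt; rw [if_neg (by omega)]

lemma nxt_right {i : ℕ} (h : 2 ≤ i) : nxt ℓ i Act.right = i + ℓ - 1 := by
  unfold nxt; rw [if_neg (by omega)]

lemma pol_right {j : ℤ} {i : ℕ} (h : (i : ℤ) = j) (h1 : 1 ≤ j) : pol j i = Act.right := by
  unfold pol; rw [if_pos ⟨h, h1⟩]

lemma pol_left {j : ℤ} {i : ℕ} (h : (i : ℤ) ≠ j ∨ j ≤ 0) : pol j i = Act.left := by
  unfold pol; rw [if_neg]; rintro ⟨h1, h2⟩
  rcases h with h | h
  · exact h h1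
  · omega

lemma bellT_low {π : ℕ → Act} {v : ℕ → ℝ} {i : ℕ} (h : i ≤ 1) :
    bellT γ ε ℓ π v i = γ * v 1 := by
  unfold bellT; rw [rew_low h, nxt_low h, zero_add]

section Signs
variable (hγ0 : 0 < γ) (hγ1 : γ < 1) (hε : 0 < ε)
include hγ0 hγ1 hε

lemma rr_nonpos {i : ℕ} (h : 1 ≤ i) : rr γ ε i ≤ 0 := by
  unfold rr
  apply div_nonpos_of_nonpos_of_nonneg
  · nlinarith [pow_le_pow_of_le_one hγ0.le hγ1.le h, pow_one γ]
  · linarith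

lemma rew_nonpos (i : ℕ) (a : Act) : rew γ ε i a ≤ 0 := by
  by_cases h : i ≤ 1
  · rw [rew_low h]
  · cases a
    · rw [rew_left]
    · rw [rew_right (by omega)]
      exact rr_nonpos hγ0 hγ1 hε (by omega)

lemma Bs_nonneg (j : ℕ) : 0 ≤ Bs γ ε j := by
  unfold Bs
  apply div_nonneg _ (by linarith)
  have := pow_le_one₀ hγ0.le hγ1.le (n := j)
  nlinarith

lemma Bs_mono {j j' : ℕ} (h : j ≤ j') : Bs γ ε j ≤ Bs γ ε j' := by
  have hp : γ ^ j' ≤ γ ^ j := pow_le_pow_of_le_one hγ0.le hγ1.le h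
  unfold Bs
  gcongr <;> linarith

lemma Bs_succ (j : ℕ) : Bs γ ε (j+1) = 2*ε + γ * Bs γ ε j := by
  have hne : (1:ℝ) - γ ≠ 0 := by linarith
  unfold Bs
  field_simp
  ring

lemma rr_eq (k : ℕ) : rr γ ε (k+1) = -(γ * Bs γ ε k) := by
  unfold rr Bs
  field_simp
  ring

lemma Bs_one : Bs γ ε 1 = 2*ε := by
  unfold Bs
  rw [pow_one, mul_div_assoc, div_self (by linarith : (1:ℝ) - γ ≠ 0), mul_one]

lemma two_eps_le_Bs {j : ℕ} (h : 1 ≤ j) : 2*ε ≤ Bs γ ε j := by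
  calc 2*ε = Bs γ ε 1 := (Bs_one hγ0 hγ1 hε).symm
  _ ≤ Bs γ ε j := Bs_mono hγ0 hγ1 hε h

end Signs
end Basic

/-! ### Pb and sum facts -/

section Sums
variable {γ ε : ℝ} {m ℓ : ℕ}

lemma geoml_succ (n : ℕ) :
    ∑ p ∈ Finset.range (n+1), γ^(p*ℓ) = 1 + γ^ℓ * ∑ p ∈ Finset.range n, γ^(p*ℓ) := by
  rw [Finset.sum_range_succ']
  have h : ∀ p, γ^((p+1)*ℓ) = γ^ℓ * γ^(p*ℓ) := by
    intro p; rw [add_mul, one_mul, pow_add, mul_comm]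
  simp only [h, zero_mul, pow_zero, ← Finset.mul_sum]
  ring

lemma geoml_nonneg (hγ0 : 0 < γ) (n : ℕ) : 0 ≤ ∑ p ∈ Finset.range n, γ^(p*ℓ) := by
  apply Finset.sum_nonneg; intro p _; positivity

lemma one_le_geoml (hγ0 : 0 < γ) (n : ℕ) : 1 ≤ ∑ p ∈ Finset.range (n+1), γ^(p*ℓ) := by
  rw [geoml_succ]
  have := geoml_nonneg (ℓ := ℓ) hγ0 n
  nlinarith [pow_pos hγ0 ℓ]

lemma Bs_eq_sum (hγ1 : γ < 1) (k : ℕ) :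
    Bs γ ε k = 2*ε*∑ r ∈ Finset.range k, γ^r := by
  unfold Bs
  rw [geom_sum_eq (by linarith : γ ≠ 1)]
  have h1 : (1:ℝ) - γ ≠ 0 := by linarith
  have h2 : γ - 1 ≠ 0 := by linarith
  field_simp
  ring

lemma Pb_nonneg (hγ0 : 0 < γ) (hε : 0 < ε) (k : ℕ) : 0 ≤ Pb γ ε m ℓ k := by
  unfold Pb
  apply mul_nonneg hε.le
  apply Finset.sum_nonneg; intro p _; positivity

lemma Pb_succ (k : ℕ) : Pb γ ε m ℓ (k+1) = ε + γ^(m*ℓ+1) * Pb γ ε m ℓ k := by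
  unfold Pb
  rw [Finset.sum_range_succ']
  have h : ∀ r : ℕ, (γ^(m*ℓ+1))^(r+1) = γ^(m*ℓ+1) * (γ^(m*ℓ+1))^r := by
    intro r; rw [pow_succ]; ring
  simp only [h, pow_zero, ← Finset.mul_sum]
  ring

lemma Pb_key (hγ0 : 0 < γ) (hγ1 : γ < 1) (hε : 0 < ε) (k : ℕ) :
    γ^(m*ℓ+1) * Pb γ ε m ℓ k ≤ -(rr γ ε (k+1)) := by
  rw [rr_eq hγ0 hγ1 hε k, neg_neg, Bs_eq_sum hγ1]
  set T := m*ℓ+1 with hT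
  have step0 : γ^T * Pb γ ε m ℓ k = ε * ∑ r ∈ Finset.range k, γ^(T*(r+1)) := by
    unfold Pb
    rw [mul_left_comm]
    congr 1
    rw [Finset.mul_sum]
    apply Finset.sum_congr rfl
    intro r _
    rw [← pow_mul, ← pow_add]
    congr 1
    ring
  have step1 : ε * ∑ r ∈ Finset.range k, γ^(T*(r+1)) ≤ ε * ∑ r ∈ Finset.range k, γ^(r+1) := by
    apply mul_le_mul_of_nonneg_left _ hε.le
    apply Finset.sum_le_sum
    intro r _
    apply pow_le_pow_of_le_one hγ0.le hγ1.le
    have h2 : r ≤ T * r := Nat.le_mul_of_pos_left r (by omega)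
    have h3 : T * (r+1) = T * r + T := by ring
    omega
  have step2 : ε * ∑ r ∈ Finset.range k, γ^(r+1) ≤ γ * (2*ε*∑ r ∈ Finset.range k, γ^r) := by
    have h : ∑ r ∈ Finset.range k, γ^(r+1) = γ * ∑ r ∈ Finset.range k, γ^r := by
      rw [Finset.mul_sum]
      apply Finset.sum_congr rfl
      intro r _; rw [pow_succ]; ring
    rw [h]
    have hs := Finset.sum_nonneg (fun r (_ : r ∈ Finset.range k) => (pow_pos hγ0 r).le)
    nlinarith [mul_nonneg (mul_nonneg hε.le hγ0.le) hs]
  calc γ^T * Pb γ ε m ℓ k = _ := step0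
    _ ≤ _ := step1
    _ ≤ _ := step2
end Sums

/-! ### operator formulas -/

section OpForm
variable {γ ε : ℝ} {m ℓ : ℕ}

lemma tcomp_formula (hℓ : 1 ≤ ℓ) : ∀ n, 1 ≤ n → n ≤ ℓ → ∀ (k : ℤ) (u : ℕ → ℝ) (i : ℕ),
    TcompD γ ε ℓ pol n k u i =
      if (i:ℤ) = k ∧ 2 ≤ i then rr γ ε i + γ^n * u (i + ℓ - n)
      else γ^n * u (max (i - n) 1) := by
  intro n
  induction n with
  | zero => omega
  | succ n ih =>
    intro _ hnl k u i
    have hstep : TcompD γ ε ℓ pol (n+1) k u i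
        = bellT γ ε ℓ (pol k) (TcompD γ ε ℓ pol n (k-1) u) i := rfl
    rcases Nat.eq_zero_or_pos n with hn0 | hn1
    · subst hn0
      have hid : TcompD γ ε ℓ pol 0 (k-1) u = u := rfl
      rw [hstep, hid]
      by_cases hi : i ≤ 1
      · rw [bellT_low hi, if_neg (by omega)]
        have : max (i-1) 1 = 1 := by omega
        rw [this, pow_one]
      · by_cases hik : (i:ℤ) = k
        · have h1 : (1:ℤ) ≤ k := by omega
          unfold bellT
          rw [pol_right hik h1, rew_right (by omega), nxt_right (by omega),
            if_pos ⟨hik, by omega⟩, pow_one]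
        · unfold bellT
          rw [pol_left (Or.inl hik), rew_left, nxt_left (by omega), if_neg (by tauto),
            pow_one, zero_add]
          congr 2
          omega
    · rw [hstep]
      by_cases hi : i ≤ 1
      · rw [bellT_low hi, ih hn1 (by omega) (k-1) u 1, if_neg (by omega), if_neg (by omega)]
        have h1 : max (1 - n) 1 = 1 := by omega
        have h2 : max (i - (n+1)) 1 = 1 := by omega
        rw [h1, h2, pow_succ]
        ring
      · by_cases hik : (i:ℤ) = k
        · have h1 : (1:ℤ) ≤ k := by omega
          unfold bellT
          rw [pol_right hik h1, rew_right (by omega), nxt_right (by omega),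
            ih hn1 (by omega) (k-1) u (i+ℓ-1), if_neg (by omega), if_pos ⟨hik, by omega⟩]
          have h2 : max (i + ℓ - 1 - n) 1 = i + ℓ - (n+1) := by omega
          rw [h2, pow_succ]
          ring
        · unfold bellT
          rw [pol_left (Or.inl hik), rew_left, nxt_left (by omega),
            ih hn1 (by omega) (k-1) u (i-1), if_neg (by omega), if_neg (by tauto),
            pow_succ, zero_add]
          have h2 : max (i - 1 - n) 1 = max (i - (n+1)) 1 := by omega
          rw [h2]
          ring

lemma tcomp_sweep (hℓ : 1 ≤ ℓ) (K : ℕ) (u : ℕ → ℝ) (i : ℕ) :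
    TcompD γ ε ℓ pol ℓ (K : ℤ) u i =
      if i = K ∧ 2 ≤ i then rr γ ε i + γ^ℓ * u i
      else γ^ℓ * u (max (i - ℓ) 1) := by
  rw [tcomp_formula hℓ ℓ hℓ le_rfl]
  by_cases h : i = K ∧ 2 ≤ i
  · obtain ⟨rfl, h2⟩ := h
    rw [if_pos ⟨rfl, h2⟩, if_pos ⟨rfl, h2⟩]
    have hKK : i + ℓ - ℓ = i := by omega
    rw [hKK]
  · have h' : ¬((i:ℤ) = (K:ℤ) ∧ 2 ≤ i) := by
      rintro ⟨h1, h2⟩; exact h ⟨by exact_mod_cast h1, h2⟩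
    rw [if_neg h', if_neg h]

lemma iterA (hℓ : 1 ≤ ℓ) {K : ℕ} (hK : 2 ≤ K) (v' : ℕ → ℝ) :
    ∀ q q', q' ≤ q →
      (TcompD γ ε ℓ pol ℓ (K : ℤ))^[q] (bellT γ ε ℓ (pol (K:ℤ)) v') (K + q'*ℓ)
        = rr γ ε K * (γ^(q'*ℓ) * ∑ p ∈ Finset.range (q - q' + 1), γ^(p*ℓ))
          + γ^(q*ℓ+1) * v' (K + ℓ - 1) := by
  intro q
  induction q with
  | zero =>
    intro q' hq'
    interval_cases q'
    simp only [Function.iterate_zero, id_eq, Nat.zero_mul, add_zero]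
    unfold bellT
    rw [pol_right (by norm_num) (by exact_mod_cast Nat.one_le_of_lt hK),
      rew_right hK, nxt_right hK]
    simp
  | succ q ih =>
    intro q' hq'
    rw [Function.iterate_succ_apply', tcomp_sweep hℓ]
    rcases Nat.eq_zero_or_pos q' with h0 | h1
    · subst h0
      have h00 : K + 0*ℓ = K := by omega
      have hih := ih 0 (Nat.zero_le q)
      rw [h00] at hih
      rw [h00, if_pos ⟨rfl, hK⟩, hih]
      simp only [Nat.zero_mul, pow_zero, one_mul, Nat.sub_zero]
      rw [geoml_succ (q+1)]
      have he : γ^ℓ * γ^(q*ℓ+1) = γ^((q+1)*ℓ+1) := by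
        rw [← pow_add]; congr 1; ring
      rw [← he]
      ring
    · obtain ⟨t, rfl⟩ : ∃ t, q' = t + 1 := ⟨q' - 1, by omega⟩
      have hge : (t+1)*ℓ = t*ℓ + ℓ := by ring
      have hne : ¬(K + (t+1)*ℓ = K ∧ 2 ≤ K + (t+1)*ℓ) := by
        rw [hge]; omega
      rw [if_neg hne]
      have hmax : max (K + (t+1)*ℓ - ℓ) 1 = K + t*ℓ := by rw [hge]; omega
      rw [hmax, ih t (by omega)]
      have hsub : q + 1 - (t+1) + 1 = q - t + 1 := by omega
      rw [hsub]
      have he1 : γ^ℓ * γ^(t*ℓ) = γ^((t+1)*ℓ) := by rw [← pow_add]; congr 1; ring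
      have he2 : γ^ℓ * γ^(q*ℓ+1) = γ^((q+1)*ℓ+1) := by rw [← pow_add]; congr 1; ring
      rw [mul_add (γ^ℓ), ← mul_assoc (γ^ℓ), ← mul_assoc (γ^ℓ),
        mul_comm (γ^ℓ) (rr γ ε K), he2]
      rw [mul_assoc (rr γ ε K) (γ^ℓ), ← mul_assoc (γ^ℓ) (γ^(t*ℓ)), he1]

lemma iterB (hℓ : 1 ≤ ℓ) (K : ℕ) (v' : ℕ → ℝ) :
    ∀ q i, (K ≤ 1 ∨ ∀ q' ≤ q, i ≠ K + q'*ℓ) →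
      (TcompD γ ε ℓ pol ℓ (K:ℤ))^[q] (bellT γ ε ℓ (pol (K:ℤ)) v') i
        = γ^(q*ℓ+1) * v' (max (i - (q*ℓ+1)) 1) := by
  intro q
  induction q with
  | zero =>
    intro i hi
    simp only [Function.iterate_zero, id_eq, Nat.zero_mul, zero_add, pow_one]
    by_cases h1 : i ≤ 1
    · rw [bellT_low h1]
      have : max (i-1) 1 = 1 := by omega
      rw [this]
    · have hiK : (i:ℤ) ≠ (K:ℤ) := by
        intro h
        have hik : i = K := by exact_mod_cast h
        rcases hi with hi | hi
        · omega
        · exact hi 0 le_rfl (by omega)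
      unfold bellT
      rw [pol_left (Or.inl hiK), rew_left, nxt_left (by omega), zero_add]
      congr 2
      omega
  | succ q ih =>
    intro i hi
    rw [Function.iterate_succ_apply', tcomp_sweep hℓ]
    have hcond : ¬(i = K ∧ 2 ≤ i) := by
      rintro ⟨rfl, h2⟩
      rcases hi with hi | hi
      · omega
      · exact hi 0 (Nat.zero_le _) (by omega)
    rw [if_neg hcond]
    have hq1 : (q+1)*ℓ = q*ℓ + ℓ := by ring
    rw [ih (max (i - ℓ) 1) ?_]
    · have : max (max (i - ℓ) 1 - (q*ℓ+1)) 1 = max (i - ((q+1)*ℓ+1)) 1 := by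
        rw [hq1]; omega
      rw [this, ← mul_assoc, ← pow_add]
      congr 2
      omega
    · by_cases hK : K ≤ 1
      · exact Or.inl hK
      · rcases hi with hi | hi
        · omega
        · right
          intro q' hq' hj
          have hj2 : i - ℓ = K + q'*ℓ := by omega
          have hiq : i = K + (q'+1)*ℓ := by
            have h3 : (q'+1)*ℓ = q'*ℓ + ℓ := by ring
            omega
          exact hi (q'+1) (by omega) hiq

end OpForm

/-! ### value function formulas -/

section VForm
variable {γ ε : ℝ} {m ℓ : ℕ}

lemma vv_succ (γ ε : ℝ) (m ℓ k : ℕ) (i : ℕ) :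
    vv γ ε m ℓ (k+1) i =
      (TcompD γ ε ℓ pol ℓ ((k+1 : ℕ) : ℤ))^[m]
        (bellT γ ε ℓ (pol ((k+1 : ℕ) : ℤ)) (vv γ ε m ℓ k)) i + errf ε ℓ (k+1) i := rfl

lemma vfA (hℓ : 1 ≤ ℓ) {k : ℕ} (hk : 1 ≤ k) {q' : ℕ} (hq' : q' ≤ m) :
    vv γ ε m ℓ (k+1) ((k+1) + q'*ℓ) = errf ε ℓ (k+1) ((k+1)+q'*ℓ)
      + (rr γ ε (k+1) * (γ^(q'*ℓ) * ∑ p ∈ Finset.range (m - q' + 1), γ^(p*ℓ))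
         + γ^(m*ℓ+1) * vv γ ε m ℓ k (k + ℓ)) := by
  rw [vv_succ, iterA hℓ (by omega) (vv γ ε m ℓ k) m q' hq']
  have h1 : k + 1 + ℓ - 1 = k + ℓ := by omega
  rw [h1, add_comm]

lemma vfB (hℓ : 1 ≤ ℓ) {k : ℕ} {i : ℕ} (h : k = 0 ∨ ∀ q' ≤ m, i ≠ (k+1) + q'*ℓ) :
    vv γ ε m ℓ (k+1) i = errf ε ℓ (k+1) i
      + γ^(m*ℓ+1) * vv γ ε m ℓ k (max (i - (m*ℓ+1)) 1) := by
  rw [vv_succ, iterB hℓ (k+1) (vv γ ε m ℓ k) m i ?_, add_comm]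
  rcases h with h | h
  · exact Or.inl (by omega)
  · exact Or.inr h

lemma errf_self {ℓ : ℕ} (k : ℕ) : errf ε ℓ k k = -ε := by
  unfold errf; rw [if_pos rfl]

lemma errf_top (hℓ : 1 ≤ ℓ) (k : ℕ) : errf ε ℓ k (k+ℓ) = ε := by
  unfold errf; rw [if_neg (by omega), if_pos rfl]

lemma errf_other {ℓ k i : ℕ} (h1 : i ≠ k) (h2 : i ≠ k + ℓ) : errf ε ℓ k i = 0 := by
  unfold errf; rw [if_neg h1, if_neg h2]

lemma errf_nonneg_of_ne (hε : 0 < ε) {ℓ k i : ℕ} (h1 : i ≠ k) : 0 ≤ errf ε ℓ k i := by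
  unfold errf; rw [if_neg h1]; split <;> linarith

end VForm

/-! ### the invariant -/

section Invariant
variable {γ ε : ℝ} {m ℓ : ℕ}
variable (hγ0 : 0 < γ) (hγ1 : γ < 1) (hε : 0 < ε) (hℓ : 1 ≤ ℓ)
include hγ0 hγ1 hε hℓ

lemma invariant : ∀ k : ℕ,
    (∀ z, z < k ∨ z ≤ ℓ → vv γ ε m ℓ k z ≤ 0) ∧
    (∀ z, z ≤ max (k-1) 1 → -ε ≤ vv γ ε m ℓ k z) ∧
    (vv γ ε m ℓ k (k+ℓ) ≤ Pb γ ε m ℓ k) ∧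
    (∀ j, 1 ≤ j → vv γ ε m ℓ k (j+ℓ) - vv γ ε m ℓ k j ≤ Bs γ ε j) ∧
    (vv γ ε m ℓ k (k+ℓ) - vv γ ε m ℓ k k = Bs γ ε k) := by
  intro k
  induction k with
  | zero =>
    have h0 : ∀ z, vv γ ε m ℓ 0 z = 0 := fun z => rfl
    refine ⟨fun z _ => le_of_eq (h0 z), fun z _ => by rw [h0]; linarith,
      by rw [h0]; exact Pb_nonneg hγ0 hε 0,
      fun j _ => by rw [h0, h0]; simpa using Bs_nonneg hγ0 hγ1 hε j,
      by rw [h0, h0]; unfold Bs; simp⟩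
  | succ k IH =>
    obtain ⟨W1, W2, W3, Gle, Geq⟩ := IH
    have hγT : γ^(m*ℓ+1) ≤ 1 := pow_le_one₀ hγ0.le hγ1.le
    have hγTpos : 0 < γ^(m*ℓ+1) := pow_pos hγ0 _
    rcases Nat.eq_zero_or_pos k with rfl | hk
    · -- base regime: iteration 1
      have hv1 : ∀ i, vv γ ε m ℓ 1 i = errf ε ℓ 1 i := by
        intro i
        rw [vfB hℓ (Or.inl rfl)]
        rw [show vv γ ε m ℓ 0 (max (i - (m*ℓ+1)) 1) = 0 from rfl, mul_zero, add_zero]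
      refine ⟨?_, ?_, ?_, ?_, ?_⟩
      · intro z hz
        rw [hv1]
        by_cases h1 : z = 1
        · subst h1; rw [errf_self]; linarith
        · rw [errf_other h1 (by omega)]
      · intro z hz
        rw [hv1]
        by_cases h1 : z = 1
        · subst h1; rw [errf_self]
        · rw [errf_other h1 (by omega)]; linarith
      · rw [hv1, errf_top hℓ]
        have hPb1 : Pb γ ε m ℓ 1 = ε := by
          rw [show (1:ℕ) = 0 + 1 from rfl, Pb_succ]
          rw [show Pb γ ε m ℓ 0 = 0 from by
            unfold Pb; rw [Finset.range_zero, Finset.sum_empty, mul_zero]]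
          ring
        linarith [hPb1.ge]
      · intro j hj
        rw [hv1, hv1]
        by_cases h1 : j = 1
        · subst h1
          rw [errf_top hℓ, errf_self, Bs_one hγ0 hγ1 hε]
          linarith
        · by_cases h3 : j = 1 + ℓ
          · subst h3
            rw [errf_other (show 1+ℓ+ℓ ≠ 1 by omega) (show 1+ℓ+ℓ ≠ 1+ℓ by omega),
              errf_top hℓ]
            have h2 := Bs_nonneg hγ0 hγ1 hε (γ := γ) (1+ℓ)
            linarith
          · rw [errf_other (show j+ℓ ≠ 1 by omega) (show j+ℓ ≠ 1+ℓ by omega),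
              errf_other h1 h3]
            simpa using Bs_nonneg hγ0 hγ1 hε (γ := γ) j
      · rw [hv1, hv1, errf_top hℓ, errf_self, Bs_one hγ0 hγ1 hε]
        ring
    · -- main regime: iteration k+1 with k ≥ 1
      have hrr : rr γ ε (k+1) ≤ 0 := rr_nonpos hγ0 hγ1 hε (by omega)
      have hpeak : vv γ ε m ℓ (k+1) ((k+1)+ℓ)
          = ε + (rr γ ε (k+1) * (γ^(1*ℓ) * ∑ p ∈ Finset.range m, γ^(p*ℓ))
            + γ^(m*ℓ+1) * vv γ ε m ℓ k (k+ℓ)) := by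
        rcases Nat.eq_zero_or_pos m with rfl | hm
        · have hno : ∀ q' ≤ 0, (k+1)+ℓ ≠ (k+1) + q'*ℓ := by
            intro q' hq'; interval_cases q'; omega
          rw [vfB hℓ (Or.inr hno), errf_top hℓ]
          have h1 : max ((k+1)+ℓ - (0*ℓ+1)) 1 = k + ℓ := by omega
          rw [h1, Finset.range_zero, Finset.sum_empty]
          ring
        · have h1 : (k+1) + ℓ = (k+1) + 1*ℓ := by ring
          rw [h1, vfA hℓ hk hm, ← h1, errf_top hℓ]
          have h2 : m - 1 + 1 = m := by omega
          rw [h2]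
      have hKval : vv γ ε m ℓ (k+1) (k+1)
          = -ε + (rr γ ε (k+1) * (∑ p ∈ Finset.range (m+1), γ^(p*ℓ))
            + γ^(m*ℓ+1) * vv γ ε m ℓ k (k+ℓ)) := by
        have h0 := vfA (γ := γ) (ε := ε) hℓ hk (q' := 0) (Nat.zero_le m)
        simp only [Nat.zero_mul, add_zero, pow_zero, one_mul, Nat.sub_zero] at h0
        rw [h0, errf_self]
      have hGeqK : vv γ ε m ℓ (k+1) ((k+1)+ℓ) - vv γ ε m ℓ (k+1) (k+1) = Bs γ ε (k+1) := by
        rw [hpeak, hKval, geoml_succ m, rr_eq hγ0 hγ1 hε k, Bs_succ hγ0 hγ1 hε k]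
        have e : γ^(1*ℓ) = γ^ℓ := by rw [one_mul]
        rw [e]
        ring
      have hPbkey := Pb_key (m := m) (ℓ := ℓ) hγ0 hγ1 hε k
      have hSum1 : (1:ℝ) ≤ ∑ p ∈ Finset.range (m+1), γ^(p*ℓ) := one_le_geoml hγ0 m
      have hVP : γ^(m*ℓ+1) * vv γ ε m ℓ k (k+ℓ) ≤ γ^(m*ℓ+1) * Pb γ ε m ℓ k :=
        mul_le_mul_of_nonneg_left W3 hγTpos.le
      refine ⟨?_, ?_, ?_, ?_, hGeqK⟩
      · -- W1
        intro z hz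
        by_cases hzK : z = k+1
        · subst hzK
          rw [hKval]
          have h2 : rr γ ε (k+1) * (∑ p ∈ Finset.range (m+1), γ^(p*ℓ)) ≤ rr γ ε (k+1) * 1 := by
            exact mul_le_mul_of_nonpos_left hSum1 hrr
          linarith
        · have hno : ∀ q' ≤ m, z ≠ (k+1) + q'*ℓ := by
            intro q' hq' hzq
            rcases Nat.eq_zero_or_pos q' with rfl | hq1
            · omega
            · have : ℓ ≤ q'*ℓ := Nat.le_mul_of_pos_left ℓ hq1
              omega
          rw [vfB hℓ (Or.inr hno)]
          have herr : errf ε ℓ (k+1) z = 0 := by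
            apply errf_other hzK
            have : ℓ ≤ 1*ℓ := le_rfl.trans (by omega)
            omega
          rw [herr, zero_add]
          have hcond : max (z - (m*ℓ+1)) 1 < k ∨ max (z - (m*ℓ+1)) 1 ≤ ℓ := by omega
          have := W1 _ hcond
          nlinarith
      · -- W2
        intro z hz
        have hzk : z ≤ k := by omega
        have hno : ∀ q' ≤ m, z ≠ (k+1) + q'*ℓ := by intro q' hq'; omega
        rw [vfB hℓ (Or.inr hno), errf_other (by omega) (by omega), zero_add]
        have hcond : max (z - (m*ℓ+1)) 1 ≤ max (k-1) 1 := by omega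
        have := W2 _ hcond
        nlinarith
      · -- W3
        rw [hpeak, Pb_succ]
        have h2 : rr γ ε (k+1) * (γ^(1*ℓ) * ∑ p ∈ Finset.range m, γ^(p*ℓ)) ≤ 0 := by
          apply mul_nonpos_of_nonpos_of_nonneg hrr
          positivity
        linarith
      · -- Gle
        intro j hj
        by_cases hjK : j = k+1
        · subst hjK; exact le_of_eq hGeqK
        · by_cases hjA : ∃ q', 1 ≤ q' ∧ q' ≤ m ∧ j = (k+1) + q'*ℓ
          · obtain ⟨q', hq1, hqm, rfl⟩ := hjA
            have e2 : (q'+1)*ℓ = q'*ℓ + ℓ := by ring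
            have hll : ℓ ≤ q'*ℓ := Nat.le_mul_of_pos_left ℓ hq1
            have hjl : vv γ ε m ℓ (k+1) ((k+1) + q'*ℓ + ℓ)
                = rr γ ε (k+1) * (γ^((q'+1)*ℓ) * ∑ p ∈ Finset.range (m - q'), γ^(p*ℓ))
                  + γ^(m*ℓ+1) * vv γ ε m ℓ k (k+ℓ) := by
              rcases Nat.lt_or_ge q' m with hlt | hge
              · have h1 : (k+1) + q'*ℓ + ℓ = (k+1) + (q'+1)*ℓ := by rw [e2]; ring
                have herr0 : errf ε ℓ (k+1) ((k+1) + (q'+1)*ℓ) = 0 :=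
                  errf_other (by omega) (by omega)
                rw [h1, vfA hℓ hk (by omega : q'+1 ≤ m)]
                have h2 : m - (q'+1) + 1 = m - q' := by omega
                rw [h2, herr0]
                ring
              · have hqm' : q' = m := by omega
                subst hqm'
                have hno : ∀ q'' ≤ q', (k+1) + q'*ℓ + ℓ ≠ (k+1) + q''*ℓ := by
                  intro q'' hq'' h
                  have : q''*ℓ ≤ q'*ℓ := Nat.mul_le_mul_right ℓ hq''
                  omega
                have herr0 : errf ε ℓ (k+1) ((k+1) + q'*ℓ + ℓ) = 0 :=
                  errf_other (by omega) (by omega)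
                rw [vfB hℓ (Or.inr hno), herr0]
                have h1 : max ((k+1) + q'*ℓ + ℓ - (q'*ℓ+1)) 1 = k + ℓ := by omega
                rw [h1, Nat.sub_self, Finset.range_zero, Finset.sum_empty]
                ring
            have hjv : vv γ ε m ℓ (k+1) ((k+1) + q'*ℓ)
                = errf ε ℓ (k+1) ((k+1) + q'*ℓ)
                  + (rr γ ε (k+1) * (γ^(q'*ℓ) * ∑ p ∈ Finset.range (m - q' + 1), γ^(p*ℓ))
                    + γ^(m*ℓ+1) * vv γ ε m ℓ k (k+ℓ)) := vfA hℓ hk hqm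
            have hdiff : vv γ ε m ℓ (k+1) ((k+1) + q'*ℓ + ℓ) - vv γ ε m ℓ (k+1) ((k+1) + q'*ℓ)
                = - errf ε ℓ (k+1) ((k+1) + q'*ℓ) - rr γ ε (k+1) * γ^(q'*ℓ) := by
              have hgs : ∑ p ∈ Finset.range (m - q' + 1), γ^(p*ℓ)
                  = 1 + γ^ℓ * ∑ p ∈ Finset.range (m - q'), γ^(p*ℓ) := geoml_succ (m - q')
              have e3 : γ^((q'+1)*ℓ) = γ^(q'*ℓ) * γ^ℓ := by rw [e2, pow_add]
              rw [hjl, hjv, hgs, e3]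
              ring
            rw [hdiff]
            have h1 : 0 ≤ errf ε ℓ (k+1) ((k+1) + q'*ℓ) := errf_nonneg_of_ne hε (by omega)
            have h2 : - rr γ ε (k+1) * γ^(q'*ℓ) ≤ - rr γ ε (k+1) := by
              nlinarith [pow_le_one₀ hγ0.le hγ1.le (n := q'*ℓ), pow_pos hγ0 (q'*ℓ)]
            have h3 : - rr γ ε (k+1) = γ * Bs γ ε k := by rw [rr_eq hγ0 hγ1 hε k]; ring
            have h4 : γ * Bs γ ε k ≤ Bs γ ε k := by
              nlinarith [Bs_nonneg (γ := γ) (ε := ε) hγ0 hγ1 hε k]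
            have h5 : Bs γ ε k ≤ Bs γ ε ((k+1) + q'*ℓ) := Bs_mono hγ0 hγ1 hε (by omega)
            linarith
          · by_cases hjB : j + ℓ = k+1
            · -- j = k+1-ℓ
              have hno : ∀ q' ≤ m, j ≠ (k+1) + q'*ℓ := by intro q' hq'; omega
              rw [hjB, hKval, vfB hℓ (Or.inr hno), errf_other (by omega) (by omega), zero_add]
              have hmx : max (j - (m*ℓ+1)) 1 ≤ max (k-1) 1 := by omega
              have hW2 := W2 _ hmx
              have h2 : rr γ ε (k+1) * (∑ p ∈ Finset.range (m+1), γ^(p*ℓ))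
                  ≤ rr γ ε (k+1) * 1 := mul_le_mul_of_nonpos_left hSum1 hrr
              rw [mul_one] at h2
              have h3 := mul_le_mul_of_nonneg_left hW2 hγTpos.le
              rw [mul_neg] at h3
              have hce : γ^(m*ℓ+1) * ε ≤ ε := mul_le_of_le_one_left hε.le hγT
              have h4 : 0 ≤ Bs γ ε j := Bs_nonneg hγ0 hγ1 hε j
              linarith
            · -- generic case
              have hnoj : ∀ q' ≤ m, j ≠ (k+1) + q'*ℓ := by
                intro q' hq' hjq
                rcases Nat.eq_zero_or_pos q' with rfl | hq1
                · omega
                · exact hjA ⟨q', hq1, hq', by omega⟩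
              have hnojl : ∀ q' ≤ m, j + ℓ ≠ (k+1) + q'*ℓ := by
                intro q' hq' hjq
                rcases Nat.eq_zero_or_pos q' with rfl | hq1
                · omega
                · have e2 : q'*ℓ = (q'-1)*ℓ + ℓ := by
                    rw [Nat.sub_one_mul]; have := Nat.le_mul_of_pos_left ℓ hq1; omega
                  have hj2 : j = (k+1) + (q'-1)*ℓ := by omega
                  rcases Nat.eq_zero_or_pos (q'-1) with hq0 | hq2
                  · rw [hq0] at hj2; omega
                  · exact hjA ⟨q'-1, hq2, by omega, hj2⟩
              rw [vfB hℓ (Or.inr hnoj), vfB hℓ (Or.inr hnojl),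
                errf_other (show j + ℓ ≠ k+1 from hjB) (by omega)]
              have herrj : 0 ≤ errf ε ℓ (k+1) j := errf_nonneg_of_ne hε hjK
              have hBs0 : 0 ≤ Bs γ ε j := Bs_nonneg hγ0 hγ1 hε j
              rcases Nat.lt_or_ge (m*ℓ+1) j with hTj | hjT
              · -- j ≥ T+1
                have hm1 : max (j - (m*ℓ+1)) 1 = j - (m*ℓ+1) := by omega
                have hm2 : max (j + ℓ - (m*ℓ+1)) 1 = (j - (m*ℓ+1)) + ℓ := by omega
                rw [hm1, hm2]
                have hG := Gle (j - (m*ℓ+1)) (by omega)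
                have hBm : Bs γ ε (j - (m*ℓ+1)) ≤ Bs γ ε j := Bs_mono hγ0 hγ1 hε (by omega)
                have hBn : 0 ≤ Bs γ ε (j - (m*ℓ+1)) := Bs_nonneg hγ0 hγ1 hε _
                have hmul := mul_le_mul_of_nonneg_left hG hγTpos.le
                rw [mul_sub] at hmul
                have hBB : γ^(m*ℓ+1) * Bs γ ε (j - (m*ℓ+1)) ≤ Bs γ ε (j - (m*ℓ+1)) :=
                  mul_le_of_le_one_left hBn hγT
                linarith
              · rcases Nat.lt_or_ge (m*ℓ+1) (j+ℓ) with hTjl | hjlT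
                · -- j ≤ T < j+ℓ
                  have hm1 : max (j - (m*ℓ+1)) 1 = 1 := by omega
                  have hm2 : max (j + ℓ - (m*ℓ+1)) 1 = j + ℓ - (m*ℓ+1) := by omega
                  rw [hm1, hm2]
                  have hx : j + ℓ - (m*ℓ+1) ≤ ℓ := by omega
                  have hW1 := W1 (j + ℓ - (m*ℓ+1)) (Or.inr hx)
                  have hW2 := W2 1 (by omega)
                  have h2e := two_eps_le_Bs hγ0 hγ1 hε hj
                  have ha := mul_le_mul_of_nonneg_left hW1 hγTpos.le
                  rw [mul_zero] at ha
                  have hb := mul_le_mul_of_nonneg_left hW2 hγTpos.le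
                  rw [mul_neg] at hb
                  have hce : γ^(m*ℓ+1) * ε ≤ ε := mul_le_of_le_one_left hε.le hγT
                  linarith
                · -- j + ℓ ≤ T
                  have hm1 : max (j - (m*ℓ+1)) 1 = 1 := by omega
                  have hm2 : max (j + ℓ - (m*ℓ+1)) 1 = 1 := by omega
                  rw [hm1, hm2]
                  linarith
end Invariant

/-! ### greediness -/

section Greedy
variable {γ ε : ℝ} {m ℓ : ℕ}
variable (hγ0 : 0 < γ) (hγ1 : γ < 1) (hε : 0 < ε) (hℓ : 1 ≤ ℓ)
include hγ0 hγ1 hε hℓ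

lemma greedy_pol (k : ℕ) :
    IsGreedyD γ ε ℓ (pol ((k+1 : ℕ) : ℤ)) (vv γ ε m ℓ k) := by
  obtain ⟨W1, W2, W3, Gle, Geq⟩ := invariant (m := m) hγ0 hγ1 hε hℓ k
  intro i
  by_cases hi : i ≤ 1
  · rw [bellT_low hi, rew_low hi Act.left, rew_low hi Act.right,
      nxt_low hi Act.left, nxt_low hi Act.right, zero_add, max_self]
  · by_cases hik : i = k+1
    · subst hik
      have hpr : pol ((k+1:ℕ):ℤ) (k+1) = Act.right := pol_right rfl (by omega)
      unfold bellT
      rw [hpr, rew_right (by omega), nxt_right (by omega), rew_left,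
        nxt_left (by omega), zero_add]
      have h1 : k+1+ℓ-1 = k+ℓ := by omega
      have h2 : k+1-1 = k := by omega
      rw [h1, h2]
      have htie : rr γ ε (k+1) + γ * vv γ ε m ℓ k (k+ℓ) = γ * vv γ ε m ℓ k k := by
        rw [rr_eq hγ0 hγ1 hε k]
        linear_combination γ * Geq
      rw [htie, max_self]
    · have hne : (i:ℤ) ≠ ((k+1:ℕ):ℤ) := fun h => hik (by exact_mod_cast h)
      have hpl : pol ((k+1:ℕ):ℤ) i = Act.left := pol_left (Or.inl hne)
      unfold bellT
      rw [hpl, rew_left, nxt_left (by omega), zero_add, rew_right (by omega),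
        nxt_right (by omega)]
      rw [max_eq_left ?_]
      obtain ⟨j, rfl⟩ : ∃ j, i = j + 1 := ⟨i - 1, by omega⟩
      have h1 : j + 1 - 1 = j := by omega
      have h2 : j + 1 + ℓ - 1 = j + ℓ := by omega
      rw [h1, h2, rr_eq hγ0 hγ1 hε j]
      have hG := Gle j (by omega)
      have hmul := mul_le_mul_of_nonneg_left hG hγ0.le
      rw [mul_sub] at hmul
      linarith

end Greedy

/-! ### value of the periodic policy -/

section Val
variable {γ ε : ℝ} {m ℓ : ℕ}
variable (hγ0 : 0 < γ) (hγ1 : γ < 1) (hε : 0 < ε) (hℓ : 1 ≤ ℓ)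
include hγ0 hγ1 hε hℓ

lemma rew_abs_le (i : ℕ) (a : Act) : |rew γ ε i a| ≤ 2*ε*γ/(1-γ) := by
  have hC : 0 ≤ 2*ε*γ/(1-γ) := div_nonneg (by positivity) (by linarith)
  by_cases h : i ≤ 1
  · rw [rew_low h]; simpa using hC
  · cases a
    · rw [rew_left]; simpa using hC
    · rw [rew_right (by omega), abs_of_nonpos (rr_nonpos hγ0 hγ1 hε (by omega))]
      unfold rr
      have key : -(-2*ε*(γ - γ^i)/(1-γ)) = 2*ε*(γ-γ^i)/(1-γ) := by ring
      rw [key]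
      have h2 : 2*ε*(γ-γ^i) ≤ 2*ε*γ := by nlinarith [pow_pos hγ0 i]
      exact (div_le_div_iff_of_pos_right (by linarith)).mpr h2

omit hℓ in
lemma val_summable (σ : ℕ → ℕ → Act) (s : ℕ) (hℓ' : 1 ≤ ℓ) :
    Summable (fun t => γ^t * rew γ ε (traj ℓ σ s t) (σ t (traj ℓ σ s t))) := by
  apply Summable.of_abs
  have hgs : Summable (fun t : ℕ => γ^t * (2*ε*γ/(1-γ))) :=
    (summable_geometric_of_lt_one hγ0.le hγ1).mul_right _
  refine Summable.of_nonneg_of_le (fun t => abs_nonneg _) (fun t => ?_) hgs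
  rw [abs_mul, abs_pow, abs_of_pos hγ0]
  exact mul_le_mul_of_nonneg_left (rew_abs_le hγ0 hγ1 hε hℓ' _ _) (by positivity)

end Val

/-! ### periodic policy values -/

section PVal
variable {γ ε : ℝ} {m ℓ : ℕ}

lemma traj_zero (σ : ℕ → ℕ → Act) (s : ℕ) : traj ℓ σ s 0 = s := rfl

lemma traj_succ (σ : ℕ → ℕ → Act) (s t : ℕ) :
    traj ℓ σ s (t+1) = nxt ℓ (traj ℓ σ s t) (σ t (traj ℓ σ s t)) := rfl

lemma traj_shift (σ : ℕ → ℕ → Act) (s d : ℕ) : ∀ t,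
    traj ℓ σ s (d + t) = traj ℓ (fun u => σ (d + u)) (traj ℓ σ s d) t := by
  intro t
  induction t with
  | zero => rfl
  | succ t ih =>
    have e : d + (t+1) = (d+t) + 1 := by omega
    rw [e, traj_succ, traj_succ, ih]

lemma traj_loop {K : ℕ} (hK : 2 ≤ K) : ∀ u, u ≤ ℓ → 1 ≤ u →
    traj ℓ (periodic ℓ pol (K:ℤ)) K u = K + ℓ - u := by
  intro u
  induction u with
  | zero => omega
  | succ u ih =>
    intro hu1 _
    rcases Nat.eq_zero_or_pos u with rfl | hu
    · rw [traj_succ, traj_zero]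
      have hP : periodic ℓ pol (K:ℤ) 0 K = Act.right := by
        unfold periodic
        apply pol_right
        · rw [Nat.zero_mod]; simp
        · rw [Nat.zero_mod]; simp; omega
      rw [hP, nxt_right hK]
    · have hs := ih (by omega) (by omega)
      rw [traj_succ, hs]
      have hP : periodic ℓ pol (K:ℤ) u (K+ℓ-u) = Act.left := by
        unfold periodic
        apply pol_left
        left
        have hmod : u % ℓ = u := Nat.mod_eq_of_lt (by omega)
        rw [hmod]
        intro heq
        omega
      rw [hP, nxt_left (by omega)]
      omega

lemma periodic_shift_period (K : ℕ) :
    (fun u => periodic ℓ pol (K:ℤ) (ℓ + u)) = periodic ℓ pol (K:ℤ) := by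
  funext u
  unfold periodic
  rw [Nat.add_mod_left]

variable (hγ0 : 0 < γ) (hγ1 : γ < 1) (hε : 0 < ε) (hℓ : 1 ≤ ℓ)
include hγ0 hγ1 hε hℓ

lemma val_shift (σ : ℕ → ℕ → Act) (s d : ℕ) :
    val γ ε ℓ σ s = (∑ t ∈ Finset.range d, γ^t * rew γ ε (traj ℓ σ s t) (σ t (traj ℓ σ s t)))
      + γ^d * val γ ε ℓ (fun u => σ (d + u)) (traj ℓ σ s d) := by
  unfold val
  rw [← (val_summable hγ0 hγ1 hε σ s hℓ).sum_add_tsum_nat_add d]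
  congr 1
  rw [← tsum_mul_left]
  apply tsum_congr
  intro t
  have e : t + d = d + t := by omega
  rw [e, traj_shift, pow_add]
  ring

omit hℓ in
lemma val_zero_of_no_reward (σ : ℕ → ℕ → Act) (s : ℕ)
    (h : ∀ t, rew γ ε (traj ℓ σ s t) (σ t (traj ℓ σ s t)) = 0) :
    val γ ε ℓ σ s = 0 := by
  unfold val
  have he : (fun t => γ^t * rew γ ε (traj ℓ σ s t) (σ t (traj ℓ σ s t)))
      = fun _ => (0:ℝ) := funext fun t => by rw [h t, mul_zero]
  rw [he, tsum_zero]

lemma val_periodic_zero {K i : ℕ} (hcond : ¬(2 ≤ K ∧ ∃ d, i = K + d * ℓ)) :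
    val γ ε ℓ (periodic ℓ pol (K:ℤ)) i = 0 := by
  have hact : ∀ t, 2 ≤ i - t → periodic ℓ pol (K:ℤ) t (i - t) = Act.left := by
    intro t hs
    unfold periodic
    apply pol_left
    left
    intro heq
    apply hcond
    have hml : t % ℓ < ℓ := Nat.mod_lt t (by omega)
    have hdm := Nat.div_add_mod t ℓ
    have hcm : (t / ℓ) * ℓ = ℓ * (t / ℓ) := Nat.mul_comm _ _
    exact ⟨by omega, ⟨t / ℓ, by omega⟩⟩
  have hstate : ∀ t, traj ℓ (periodic ℓ pol (K:ℤ)) i t = i - t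
      ∨ traj ℓ (periodic ℓ pol (K:ℤ)) i t ≤ 1 := by
    intro t
    induction t with
    | zero => exact Or.inl rfl
    | succ t ih =>
      rcases ih with h | h
      · by_cases hs : i - t ≤ 1
        · right; rw [traj_succ, h, nxt_low hs]
        · left
          rw [traj_succ, h, hact t (by omega), nxt_left (by omega)]
          omega
      · right; rw [traj_succ, nxt_low h]
  apply val_zero_of_no_reward hγ0 hγ1 hε
  intro t
  rcases hstate t with h | h
  · by_cases hs : i - t ≤ 1
    · rw [h]; exact rew_low (by omega) _
    · rw [h, hact t (by omega)]; exact rew_left _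
  · exact rew_low h _

lemma val_loop {K : ℕ} (hK : 2 ≤ K) :
    val γ ε ℓ (periodic ℓ pol (K:ℤ)) K = rr γ ε K / (1 - γ^ℓ) := by
  have hvs := val_shift hγ0 hγ1 hε hℓ (periodic ℓ pol (K:ℤ)) K ℓ
  have htl : traj ℓ (periodic ℓ pol (K:ℤ)) K ℓ = K := by
    have h := traj_loop (ℓ := ℓ) hK ℓ le_rfl hℓ
    rw [h]; omega
  rw [htl, periodic_shift_period] at hvs
  have hP0 : periodic ℓ pol (K:ℤ) 0 K = Act.right := by
    unfold periodic
    apply pol_right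
    · rw [Nat.zero_mod]; simp
    · rw [Nat.zero_mod]; simp; omega
  have hsum : (∑ t ∈ Finset.range ℓ, γ^t * rew γ ε (traj ℓ (periodic ℓ pol (K:ℤ)) K t)
      (periodic ℓ pol (K:ℤ) t (traj ℓ (periodic ℓ pol (K:ℤ)) K t))) = rr γ ε K := by
    rw [Finset.sum_eq_single_of_mem 0 (Finset.mem_range.mpr (by omega))]
    · rw [pow_zero, one_mul, traj_zero, hP0, rew_right hK]
    · intro t ht htne
      have h1t : 1 ≤ t := by omega
      have htl2 : t ≤ ℓ := le_of_lt (Finset.mem_range.mp ht)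
      rw [traj_loop (ℓ := ℓ) hK t htl2 h1t]
      have hPt : periodic ℓ pol (K:ℤ) t (K+ℓ-t) = Act.left := by
        unfold periodic
        apply pol_left
        left
        have hmod : t % ℓ = t := Nat.mod_eq_of_lt (Finset.mem_range.mp ht)
        rw [hmod]
        intro heq
        omega
      rw [hPt, rew_left, mul_zero]
  rw [hsum] at hvs
  have hγℓ : γ^ℓ < 1 := pow_lt_one₀ hγ0.le hγ1 (by omega)
  rw [eq_div_iff (by linarith : (1:ℝ) - γ^ℓ ≠ 0)]
  linear_combination hvs

lemma val_desc {K : ℕ} (hK : 2 ≤ K) (d : ℕ) :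
    val γ ε ℓ (periodic ℓ pol (K:ℤ)) (K + d*ℓ)
      = γ^(d*ℓ) * val γ ε ℓ (periodic ℓ pol (K:ℤ)) K := by
  have hact : ∀ t < d*ℓ, periodic ℓ pol (K:ℤ) t (K + d*ℓ - t) = Act.left := by
    intro t ht
    unfold periodic
    apply pol_left
    left
    intro heq
    have hml : t % ℓ < ℓ := Nat.mod_lt t (by omega)
    omega
  have hstate : ∀ t ≤ d*ℓ, traj ℓ (periodic ℓ pol (K:ℤ)) (K + d*ℓ) t = K + d*ℓ - t := by
    intro t
    induction t with
    | zero => intro _; rfl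
    | succ t ih =>
      intro ht
      rw [traj_succ, ih (by omega), hact t (by omega), nxt_left (by omega)]
      omega
  have hvs := val_shift hγ0 hγ1 hε hℓ (periodic ℓ pol (K:ℤ)) (K + d*ℓ) (d*ℓ)
  have hsum0 : (∑ t ∈ Finset.range (d*ℓ), γ^t * rew γ ε
      (traj ℓ (periodic ℓ pol (K:ℤ)) (K + d*ℓ) t)
      (periodic ℓ pol (K:ℤ) t (traj ℓ (periodic ℓ pol (K:ℤ)) (K + d*ℓ) t))) = 0 := by
    apply Finset.sum_eq_zero
    intro t ht
    have ht' := Finset.mem_range.mp ht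
    rw [hstate t (le_of_lt ht'), hact t ht', rew_left, mul_zero]
  have htD : traj ℓ (periodic ℓ pol (K:ℤ)) (K + d*ℓ) (d*ℓ) = K := by
    rw [hstate (d*ℓ) le_rfl]; omega
  have hper : (fun u => periodic ℓ pol (K:ℤ) (d*ℓ + u)) = periodic ℓ pol (K:ℤ) := by
    funext u
    unfold periodic
    rw [Nat.add_comm (d*ℓ) u, Nat.add_mul_mod_self_right]
  rw [hsum0, htD, hper, zero_add] at hvs
  exact hvs

lemma vstar_zero (i : ℕ) : (⨆ σ : ℕ → ℕ → Act, val γ ε ℓ σ i) = 0 := by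
  haveI : Nonempty (ℕ → ℕ → Act) := ⟨fun _ _ => Act.left⟩
  have hub : ∀ σ : ℕ → ℕ → Act, val γ ε ℓ σ i ≤ 0 := fun σ =>
    tsum_nonpos (fun t => mul_nonpos_of_nonneg_of_nonpos (by positivity)
      (rew_nonpos hγ0 hγ1 hε _ _))
  have hl : val γ ε ℓ (fun _ _ => Act.left) i = 0 :=
    val_zero_of_no_reward hγ0 hγ1 hε _ _ (fun t => rew_left _)
  apply le_antisymm (ciSup_le hub)
  refine le_ciSup_of_le ⟨0, ?_⟩ (fun _ _ => Act.left) hl.ge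
  rintro x ⟨σ, rfl⟩
  exact hub σ

lemma final_sup (K : ℕ) (hK1 : 1 ≤ K) :
    (⨆ i : ℕ, |(⨆ σ : ℕ → ℕ → Act, val γ ε ℓ σ i) - val γ ε ℓ (periodic ℓ pol (K:ℤ)) i|)
      = 2 * (γ - γ ^ K) * ε / ((1 - γ) * (1 - γ ^ ℓ)) := by
  have h1γ : (0:ℝ) < 1 - γ := by linarith
  have h1γℓ : (0:ℝ) < 1 - γ^ℓ := by
    have := pow_lt_one₀ hγ0.le hγ1 (by omega : ℓ ≠ 0); linarith
  simp only [vstar_zero hγ0 hγ1 hε hℓ, zero_sub, abs_neg]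
  rcases eq_or_lt_of_le hK1 with h1 | hK2x
  · -- K = 1
    have hz : ∀ i, val γ ε ℓ (periodic ℓ pol (K:ℤ)) i = 0 := by
      intro i
      exact val_periodic_zero hγ0 hγ1 hε hℓ (by rintro ⟨h2, _⟩; omega)
    simp only [hz, abs_zero, ciSup_const]
    rw [← h1, pow_one]
    simp
  · have hK2 : 2 ≤ K := hK2x
    have hloop := val_loop hγ0 hγ1 hε hℓ hK2
    have hLnn : 0 ≤ 2 * (γ - γ^K) * ε / ((1-γ)*(1-γ^ℓ)) := by
      have hp : γ^K ≤ γ := by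
        calc γ^K ≤ γ^1 := pow_le_pow_of_le_one hγ0.le hγ1.le hK1
        _ = γ := pow_one γ
      apply div_nonneg (by nlinarith) (by nlinarith)
    have habs : |val γ ε ℓ (periodic ℓ pol (K:ℤ)) K|
        = 2 * (γ - γ^K) * ε / ((1-γ)*(1-γ^ℓ)) := by
      rw [hloop, abs_div, abs_of_pos h1γℓ,
        abs_of_nonpos (rr_nonpos hγ0 hγ1 hε (by omega))]
      unfold rr
      field_simp
    have hbound : ∀ i, |val γ ε ℓ (periodic ℓ pol (K:ℤ)) i|
        ≤ 2 * (γ - γ^K) * ε / ((1-γ)*(1-γ^ℓ)) := by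
      intro i
      by_cases hEx : ∃ d, i = K + d*ℓ
      · obtain ⟨d, rfl⟩ := hEx
        rw [val_desc hγ0 hγ1 hε hℓ hK2 d, abs_mul, abs_pow, abs_of_pos hγ0, habs]
        exact mul_le_of_le_one_left hLnn (pow_le_one₀ hγ0.le hγ1.le)
      · rw [val_periodic_zero hγ0 hγ1 hε hℓ (by rintro ⟨_, hex⟩; exact hEx hex), abs_zero]
        exact hLnn
    apply le_antisymm (ciSup_le hbound)
    calc 2 * (γ - γ^K) * ε / ((1-γ)*(1-γ^ℓ))
        = |val γ ε ℓ (periodic ℓ pol (K:ℤ)) K| := habs.symm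
      _ ≤ _ := le_ciSup ⟨_, by rintro x ⟨i, rfl⟩; exact hbound i⟩ K

end PVal

/-- Tightness (Theorem 3 of the paper): on the MDP `M(γ, ε, ℓ)`, with `v_0 = 0`, all initial
policies equal to always-left, and the specified error terms, some run of MPI produces for
every `k ≥ 1` a periodic non-stationary policy whose loss exactly equals
`2(γ−γ^k)ε/((1−γ)(1−γ^ℓ))`, matching the performance bound (here `‖v_*−v_0‖_∞ = 0`). -/
theorem detMDP_mpi_tightness
    (γ ε : ℝ) (hγ0 : 0 < γ) (hγ1 : γ < 1) (hε : 0 < ε)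
    (m ℓ : ℕ) (hℓ : 1 ≤ ℓ) :
    ∃ (π : ℤ → ℕ → Act) (v : ℕ → ℕ → ℝ),
      (∀ j : ℤ, j ≤ 0 → π j = fun _ => Act.left) ∧
      (v 0 = fun _ => 0) ∧
      (∀ k : ℕ, 1 ≤ k →
        IsGreedyD γ ε ℓ (π (k : ℤ)) (v (k - 1)) ∧
        v k = fun i =>
          (TcompD γ ε ℓ π ℓ (k : ℤ))^[m] (bellT γ ε ℓ (π (k : ℤ)) (v (k - 1))) i
            + errf ε ℓ k i) ∧
      (∀ k : ℕ, 1 ≤ k →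
        (⨆ i : ℕ,
          |(⨆ σ : ℕ → ℕ → Act, val γ ε ℓ σ i) - val γ ε ℓ (periodic ℓ π (k : ℤ)) i|)
          = 2 * (γ - γ ^ k) * ε / ((1 - γ) * (1 - γ ^ ℓ))) := by
  refine ⟨pol, vv γ ε m ℓ, ?_, rfl, ?_, ?_⟩
  · intro j hj
    funext i
    exact pol_left (Or.inr hj)
  · intro k hk
    obtain ⟨n, rfl⟩ : ∃ n, k = n + 1 := ⟨k - 1, by omega⟩
    exact ⟨greedy_pol (m := m) hγ0 hγ1 hε hℓ n, rfl⟩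
  · intro k hk
    exact final_sup hγ0 hγ1 hε hℓ k hk
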